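/- If D is a directed family of pseudometrics generating the topology of a Hausdorff space X (a directed admissible multimetric), then the family D_H = { d_H : d ∈ D } of induced Hausdorff pseudometrics generates the Vietoris topology on the hyperspace K(X) of nonempty compact subsets of X. -/

import Mathlib

open Filter Topology ENNReal

/-- The Hausdorff pseudometric (with values in `ℝ≥0∞`) induced by a real-valued
pseudometric `d` on subsets of `X`. -/
noncomputable def hausd {X : Type*} (d : X → X → ℝ) (A B : Set X) : ℝ≥0∞ :=
  max (⨆ a ∈ A, ⨅ b ∈ B, ENNReal.ofReal (d a b))
      (⨆ b ∈ B, ⨅ a ∈ A, ENNReal.ofReal (d a b))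

section Aux

variable {X : Type*}

lemma biInf_add_ennreal (s : Set X) (f : X → ℝ≥0∞) (a : ℝ≥0∞) :
    (⨅ x ∈ s, f x) + a = ⨅ x ∈ s, (f x + a) := by
  rw [ENNReal.iInf_add]
  exact iInf_congr fun x => ENNReal.iInf_add

lemma aux_tri {e : X → X → ℝ≥0∞} (he : ∀ a b c, e a c ≤ e a b + e b c)
    (A B C : Set X) :
    (⨆ a ∈ A, ⨅ c ∈ C, e a c) ≤
      (⨆ a ∈ A, ⨅ b ∈ B, e a b) + (⨆ b ∈ B, ⨅ c ∈ C, e b c) := by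
  refine iSup₂_le fun a ha => ?_
  have step1 : (⨅ c ∈ C, e a c) ≤ (⨅ b ∈ B, e a b) + (⨆ b ∈ B, ⨅ c ∈ C, e b c) := by
    rw [biInf_add_ennreal]
    refine le_iInf₂ fun b hb => ?_
    have h2 : (⨅ c ∈ C, e a c) ≤ e a b + ⨅ c ∈ C, e b c := by
      calc (⨅ c ∈ C, e a c) ≤ ⨅ c ∈ C, (e a b + e b c) :=
            iInf₂_mono fun c _ => he a b c
        _ = e a b + ⨅ c ∈ C, e b c := by
            rw [ENNReal.add_iInf]
            exact iInf_congr fun c => ENNReal.add_iInf.symm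
    exact h2.trans (add_le_add_right (le_iSup₂ (f := fun b _ => ⨅ c ∈ C, e b c) b hb) _)
  exact step1.trans (add_le_add_left (le_iSup₂ (f := fun a _ => ⨅ b ∈ B, e a b) a ha) _)

lemma hausd_triangle {d : X → X → ℝ}
    (htri : ∀ x y z, d x z ≤ d x y + d y z) (A B C : Set X) :
    hausd d A C ≤ hausd d A B + hausd d B C := by
  have he : ∀ a b c, ENNReal.ofReal (d a c) ≤
      ENNReal.ofReal (d a b) + ENNReal.ofReal (d b c) := fun a b c =>
    (ENNReal.ofReal_le_ofReal (htri a b c)).trans ENNReal.ofReal_add_le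
  have he' : ∀ a b c, ENNReal.ofReal (d c a) ≤
      ENNReal.ofReal (d b a) + ENNReal.ofReal (d c b) := fun a b c => by
    rw [add_comm]; exact he c b a
  unfold hausd
  refine max_le ?_ ?_
  · exact ((aux_tri he A B C).trans
      (add_le_add (le_max_left _ _) (le_max_left _ _))).trans le_rfl
  · have h := aux_tri (e := fun x y => ENNReal.ofReal (d y x)) he' C B A
    refine h.trans ?_
    rw [add_comm]
    exact add_le_add (le_max_right _ _) (le_max_right _ _)

lemma hausd_self {d : X → X → ℝ} (h0 : ∀ x, d x x = 0) (A : Set X) :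
    hausd d A A = 0 := by
  unfold hausd
  refine le_antisymm (max_le ?_ ?_) zero_le
  · exact iSup₂_le fun a ha => (iInf₂_le a ha).trans (by simp [h0 a])
  · exact iSup₂_le fun b hb => (iInf₂_le b hb).trans (by simp [h0 b])

lemma pm_nonneg {d : X → X → ℝ} (h0 : ∀ x, d x x = 0) (hsymm : ∀ x y, d x y = d y x)
    (htri : ∀ x y z, d x z ≤ d x y + d y z) (x y : X) : 0 ≤ d x y := by
  have := htri x y x
  rw [h0, hsymm y x] at this
  linarith

lemma isOpen_of_forall_mem {α : Type*} {τ : TopologicalSpace α} {S : Set α}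
    (h : ∀ x ∈ S, ∃ W, IsOpen[τ] W ∧ x ∈ W ∧ W ⊆ S) : IsOpen[τ] S := by
  letI := τ
  refine isOpen_iff_forall_mem_open.2 fun x hx => ?_
  obtain ⟨W, hW, hxW, hWS⟩ := h x hx
  exact ⟨W, hWS, hW, hxW⟩

variable [t : TopologicalSpace X] {D : Set (X → X → ℝ)}

lemma ball_open
    (hadm : TopologicalSpace.generateFrom
      {U : Set X | ∃ d ∈ D, ∃ x : X, ∃ ε : ℝ, 0 < ε ∧ U = {y | d x y < ε}} = t)
    {d : X → X → ℝ} (hd : d ∈ D) (x : X) {ε : ℝ} (hε : 0 < ε) :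
    IsOpen {y | d x y < ε} := by
  rw [← hadm]
  exact TopologicalSpace.GenerateOpen.basic _ ⟨d, hd, x, ε, hε, rfl⟩

lemma exists_ball_subset
    (hps : ∀ d ∈ D, (∀ x, d x x = 0) ∧ (∀ x y, d x y = d y x) ∧
      (∀ x y z, d x z ≤ d x y + d y z))
    (hdir : ∀ d₁ ∈ D, ∀ d₂ ∈ D, ∃ d₃ ∈ D, ∀ x y, max (d₁ x y) (d₂ x y) ≤ d₃ x y)
    (hD : D.Nonempty)
    (hadm : TopologicalSpace.generateFrom
      {U : Set X | ∃ d ∈ D, ∃ x : X, ∃ ε : ℝ, 0 < ε ∧ U = {y | d x y < ε}} = t)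
    {U : Set X} (hU : IsOpen U) {x : X} (hx : x ∈ U) :
    ∃ d ∈ D, ∃ ε : ℝ, 0 < ε ∧ {y | d x y < ε} ⊆ U := by
  rw [← hadm] at hU
  induction hU with
  | basic V hV =>
      obtain ⟨d, hd, x₀, ε, hε, rfl⟩ := hV
      refine ⟨d, hd, ε - d x₀ x, by simpa using hx, fun y hy => ?_⟩
      have htri := (hps d hd).2.2 x₀ x y
      simp only [Set.mem_setOf_eq] at hy ⊢
      linarith
  | univ =>
      obtain ⟨d, hd⟩ := hD
      exact ⟨d, hd, 1, one_pos, fun _ _ => trivial⟩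
  | inter V W hV hW ihV ihW =>
      obtain ⟨d₁, hd₁, ε₁, hε₁, h₁⟩ := ihV hx.1
      obtain ⟨d₂, hd₂, ε₂, hε₂, h₂⟩ := ihW hx.2
      obtain ⟨d₃, hd₃, h₃⟩ := hdir d₁ hd₁ d₂ hd₂
      refine ⟨d₃, hd₃, min ε₁ ε₂, lt_min hε₁ hε₂, fun y hy => ?_⟩
      simp only [Set.mem_setOf_eq] at hy
      constructor
      · exact h₁ (show d₁ x y < ε₁ from
          lt_of_le_of_lt ((le_max_left _ _).trans (h₃ x y)) (hy.trans_le (min_le_left _ _)))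
      · exact h₂ (show d₂ x y < ε₂ from
          lt_of_le_of_lt ((le_max_right _ _).trans (h₃ x y)) (hy.trans_le (min_le_right _ _)))
  | sUnion S hS ih =>
      obtain ⟨V, hVS, hxV⟩ := hx
      obtain ⟨d, hd, ε, hε, h⟩ := ih V hVS hxV
      exact ⟨d, hd, ε, hε, h.trans (Set.subset_sUnion_of_mem hVS)⟩

lemma exists_dominating
    (hdir : ∀ d₁ ∈ D, ∀ d₂ ∈ D, ∃ d₃ ∈ D, ∀ x y, max (d₁ x y) (d₂ x y) ≤ d₃ x y)
    (hD : D.Nonempty) {ι : Type*} (F : Finset ι) (f : ι → X → X → ℝ)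
    (hf : ∀ i ∈ F, f i ∈ D) : ∃ d ∈ D, ∀ i ∈ F, ∀ x y, f i x y ≤ d x y := by
  classical
  revert hf
  induction F using Finset.induction_on with
  | empty =>
      intro _
      obtain ⟨d, hd⟩ := hD
      exact ⟨d, hd, by simp⟩
  | insert _ _ hi ih =>
      rename_i i F
      intro hf
      obtain ⟨d, hd, hdom⟩ := ih (fun j hj => hf j (Finset.mem_insert_of_mem hj))
      obtain ⟨d', hd', h'⟩ := hdir (f i) (hf i (Finset.mem_insert_self i F)) d hd
      refine ⟨d', hd', fun j hj x y => ?_⟩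
      rcases Finset.mem_insert.1 hj with rfl | hj
      · exact (le_max_left _ _).trans (h' x y)
      · exact (hdom j hj x y).trans ((le_max_right _ _).trans (h' x y))

end Aux

lemma all_open_of_trivial {α : Type*} (h : ∀ S : Set α, S = ∅ ∨ S = Set.univ)
    (τ : TopologicalSpace α) (S : Set α) : IsOpen[τ] S := by
  letI := τ
  rcases h S with rfl | rfl
  · exact isOpen_empty
  · exact isOpen_univ

/-- If `D` is a directed admissible multimetric on a Hausdorff space `X`, then the family
`D_H` of induced Hausdorff pseudometrics generates the Vietoris topology on the hyperspace
of nonempty compact subsets of `X`. -/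
theorem directed_multimetric_hausdorff_generates_vietoris {X : Type*}
    [t : TopologicalSpace X] [T2Space X] (D : Set (X → X → ℝ))
    (hps : ∀ d ∈ D, (∀ x, d x x = 0) ∧ (∀ x y, d x y = d y x) ∧
      (∀ x y z, d x z ≤ d x y + d y z))
    (hsep : ∀ x y : X, x ≠ y → ∃ d ∈ D, 0 < d x y)
    (hdir : ∀ d₁ ∈ D, ∀ d₂ ∈ D, ∃ d₃ ∈ D, ∀ x y, max (d₁ x y) (d₂ x y) ≤ d₃ x y)
    (hadm : TopologicalSpace.generateFrom
      {U : Set X | ∃ d ∈ D, ∃ x : X, ∃ ε : ℝ, 0 < ε ∧ U = {y | d x y < ε}} = t) :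
    TopologicalSpace.generateFrom
        ({S : Set {K : Set X // K.Nonempty ∧ IsCompact K} |
            ∃ U : Set X, IsOpen U ∧ S = {K | K.1 ⊆ U}} ∪
          {S : Set {K : Set X // K.Nonempty ∧ IsCompact K} |
            ∃ U : Set X, IsOpen U ∧ S = {K | (K.1 ∩ U).Nonempty}}) =
      TopologicalSpace.generateFrom
        {S : Set {K : Set X // K.Nonempty ∧ IsCompact K} |
          ∃ d ∈ D, ∃ K₀ : {K : Set X // K.Nonempty ∧ IsCompact K}, ∃ ε : ℝ≥0∞,
            0 < ε ∧ ε ≠ ⊤ ∧ S = {L | hausd d K₀.1 L.1 < ε}} := by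
  classical
  rcases D.eq_empty_or_nonempty with rfl | hD
  · -- degenerate case : `X` is a subsingleton, all topologies agree
    have hsub : ∀ x y : X, x = y := fun x y => by
      by_contra h
      obtain ⟨d, hd, -⟩ := hsep x y h
      exact hd
    have hsubK : ∀ K L : {K : Set X // K.Nonempty ∧ IsCompact K}, K = L := by
      rintro ⟨K, ⟨k, hk⟩, -⟩ ⟨L, ⟨l, hl⟩, -⟩
      refine Subtype.ext ?_
      ext z
      constructor
      · intro _; rw [hsub z l]; exact hl
      · intro _; rw [hsub z k]; exact hk
    have hset : ∀ S : Set {K : Set X // K.Nonempty ∧ IsCompact K},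
        S = ∅ ∨ S = Set.univ := by
      intro S
      rcases S.eq_empty_or_nonempty with h | ⟨k, hk⟩
      · exact Or.inl h
      · refine Or.inr (Set.eq_univ_of_forall fun j => ?_)
        rw [hsubK j k]; exact hk
    exact le_antisymm (le_generateFrom fun s _ => all_open_of_trivial hset _ s)
      (le_generateFrom fun s _ => all_open_of_trivial hset _ s)
  -- main case
  refine le_antisymm (le_generateFrom fun S hS => ?_) (le_generateFrom fun S hS => ?_)
  · -- every Hausdorff ball is Vietoris-open
    obtain ⟨d, hd, K₀, ε, hε, hεtop, rfl⟩ := hS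
    obtain ⟨hd0, hdsymm, hdtri⟩ := hps d hd
    refine isOpen_of_forall_mem fun L hL => ?_
    simp only [Set.mem_setOf_eq] at hL
    set h₀ := hausd d K₀.1 L.1 with hh₀
    have hne : h₀ ≠ ⊤ := (lt_of_lt_of_le hL le_top).ne
    have hc : 0 < ε - h₀ := tsub_pos_of_lt hL
    have hcne : ε - h₀ ≠ ⊤ := ne_top_of_le_ne_top hεtop tsub_le_self
    set c' := min ((ε - h₀) / 2) 1 with hc'def
    have hc'pos : 0 < c' := lt_min (ENNReal.half_pos hc.ne') one_pos
    have hc'top : c' ≠ ⊤ := ne_top_of_le_ne_top one_ne_top (min_le_right _ _)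
    set δ := c'.toReal / 2 with hδdef
    have hδ : 0 < δ := div_pos (ENNReal.toReal_pos hc'pos.ne' hc'top) two_pos
    have hofReal : ENNReal.ofReal (2 * δ) = c' := by
      have h2δ : 2 * δ = c'.toReal := by rw [hδdef]; ring
      rw [h2δ, ENNReal.ofReal_toReal hc'top]
    have hkey : h₀ + ENNReal.ofReal (2 * δ) < ε := by
      rw [hofReal]
      calc h₀ + c' ≤ h₀ + (ε - h₀) / 2 := add_le_add_right (min_le_left _ _) _
        _ < h₀ + (ε - h₀) := ENNReal.add_lt_add_left hne (ENNReal.half_lt_self hc.ne' hcne)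
        _ = ε := add_tsub_cancel_of_le hL.le
    set U := ⋃ x ∈ L.1, {y | d x y < δ} with hUdef
    have hLU : L.1 ⊆ U := fun x hx =>
      Set.mem_biUnion hx (by simp [hd0 x, hδ])
    obtain ⟨F, hF⟩ := L.2.2.elim_finite_subcover (fun x : L.1 => {y | d x.1 y < δ})
      (fun x => ball_open hadm hd x.1 hδ)
      (fun x hx => Set.mem_iUnion.2 ⟨⟨x, hx⟩, by simp [hd0 x, hδ]⟩)
    refine ⟨{M | M.1 ⊆ U} ∩ ⋂ i ∈ F, {M | (M.1 ∩ {y | d i.1 y < δ}).Nonempty},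
      ?_, ⟨hLU, Set.mem_iInter₂.2 fun i hi => ⟨i.1, i.2, by simp [hd0 i.1, hδ]⟩⟩,
      ?_⟩
    · -- openness in the Vietoris-generated topology
      letI := TopologicalSpace.generateFrom
        ({S : Set {K : Set X // K.Nonempty ∧ IsCompact K} |
            ∃ U : Set X, IsOpen U ∧ S = {K | K.1 ⊆ U}} ∪
          {S : Set {K : Set X // K.Nonempty ∧ IsCompact K} |
            ∃ U : Set X, IsOpen U ∧ S = {K | (K.1 ∩ U).Nonempty}})
      refine IsOpen.inter ?_ (isOpen_biInter_finset fun i _ => ?_)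
      · exact TopologicalSpace.isOpen_generateFrom_of_mem
          (Or.inl ⟨U, isOpen_biUnion fun x _ => ball_open hadm hd x hδ, rfl⟩)
      · exact TopologicalSpace.isOpen_generateFrom_of_mem
          (Or.inr ⟨{y | d i.1 y < δ}, ball_open hadm hd i.1 hδ, rfl⟩)
    · -- the Vietoris neighbourhood is inside the ball
      rintro M ⟨hMU, hMF⟩
      have hLM : hausd d L.1 M.1 ≤ ENNReal.ofReal (2 * δ) := by
        unfold hausd
        refine max_le ?_ ?_
        · refine iSup₂_le fun a ha => ?_
          obtain ⟨i, hiF, hia⟩ := Set.mem_iUnion₂.1 (hF ha)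
          obtain ⟨m, hmM, hm⟩ := Set.mem_iInter₂.1 hMF i hiF
          refine (iInf₂_le m hmM).trans (ENNReal.ofReal_le_ofReal ?_)
          have h1 := hdtri a i.1 m
          have h2 := hdsymm a i.1
          simp only [Set.mem_setOf_eq] at hia hm
          linarith
        · refine iSup₂_le fun b hb => ?_
          obtain ⟨x, hxL, hxb⟩ := Set.mem_iUnion₂.1 (hMU hb)
          simp only [Set.mem_setOf_eq] at hxb
          exact (iInf₂_le x hxL).trans (ENNReal.ofReal_le_ofReal (by linarith))
      show hausd d K₀.1 M.1 < ε
      calc hausd d K₀.1 M.1 ≤ h₀ + hausd d L.1 M.1 := hausd_triangle hdtri _ _ _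
        _ ≤ h₀ + ENNReal.ofReal (2 * δ) := add_le_add_right hLM _
        _ < ε := hkey
  · -- every Vietoris subbasic set is open in the Hausdorff-ball topology
    rcases hS with ⟨U, hU, rfl⟩ | ⟨U, hU, rfl⟩
    · -- S = {K | K.1 ⊆ U}
      refine isOpen_of_forall_mem fun L hL => ?_
      simp only [Set.mem_setOf_eq] at hL
      have hch : ∀ x : L.1, ∃ d ∈ D, ∃ ε : ℝ, 0 < ε ∧ {y | d x.1 y < ε} ⊆ U :=
        fun x => exists_ball_subset hps hdir hD hadm hU (hL x.2)
      choose f hfD εf hεf hball using hch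
      obtain ⟨F, hF⟩ := L.2.2.elim_finite_subcover
        (fun x : L.1 => {y | f x x.1 y < εf x / 2})
        (fun x => ball_open hadm (hfD x) x.1 (half_pos (hεf x)))
        (fun x hx => Set.mem_iUnion.2 ⟨⟨x, hx⟩,
          show f ⟨x, hx⟩ x x < εf ⟨x, hx⟩ / 2 by
            rw [(hps _ (hfD ⟨x, hx⟩)).1 x]; exact half_pos (hεf _)⟩)
      have hFne : F.Nonempty := by
        obtain ⟨a, ha⟩ := L.2.1
        obtain ⟨i, hiF, -⟩ := Set.mem_iUnion₂.1 (hF ha)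
        exact ⟨i, hiF⟩
      obtain ⟨d, hd, hdom⟩ := exists_dominating hdir hD F f (fun i _ => hfD i)
      set ε0 := F.inf' hFne εf with hε0def
      have hε0 : 0 < ε0 := (Finset.lt_inf'_iff _).2 fun i _ => hεf i
      set ε := ε0 / 2 with hεdef
      have hε : 0 < ε := half_pos hε0
      refine ⟨{M | hausd d L.1 M.1 < ENNReal.ofReal ε}, ?_, ?_, ?_⟩
      · exact TopologicalSpace.isOpen_generateFrom_of_mem
          ⟨d, hd, L, ENNReal.ofReal ε, ENNReal.ofReal_pos.2 hε, ENNReal.ofReal_ne_top, rfl⟩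
      · show hausd d L.1 L.1 < ENNReal.ofReal ε
        rw [hausd_self (hps d hd).1]
        exact ENNReal.ofReal_pos.2 hε
      · intro M hM
        simp only [Set.mem_setOf_eq] at hM ⊢
        intro m hm
        have h2 : (⨆ b ∈ M.1, ⨅ a ∈ L.1, ENNReal.ofReal (d a b)) < ENNReal.ofReal ε :=
          (le_max_right _ _).trans_lt hM
        have h3 : (⨅ a ∈ L.1, ENNReal.ofReal (d a m)) < ENNReal.ofReal ε :=
          lt_of_le_of_lt (le_iSup₂ (f := fun b _ => ⨅ a ∈ L.1, ENNReal.ofReal (d a b)) m hm) h2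
        obtain ⟨a, ha⟩ := iInf_lt_iff.1 h3
        obtain ⟨haL, ham⟩ := iInf_lt_iff.1 ha
        have hdm : d a m < ε := (ENNReal.ofReal_lt_ofReal_iff hε).1 ham
        obtain ⟨i, hiF, hia⟩ := Set.mem_iUnion₂.1 (hF haL)
        simp only [Set.mem_setOf_eq] at hia
        refine hball i ?_
        show f i i.1 m < εf i
        obtain ⟨h0i, hsymmi, htrii⟩ := hps (f i) (hfD i)
        have h5 := htrii i.1 a m
        have h6 : f i a m ≤ d a m := hdom i hiF a m
        have h7 : ε0 ≤ εf i := Finset.inf'_le εf hiF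
        have h8 : ε = ε0 / 2 := hεdef
        linarith
    · -- S = {K | (K.1 ∩ U).Nonempty}
      refine isOpen_of_forall_mem fun L hL => ?_
      simp only [Set.mem_setOf_eq] at hL
      obtain ⟨x₀, hx₀L, hx₀U⟩ := hL
      obtain ⟨d, hd, ε, hε, hball⟩ := exists_ball_subset hps hdir hD hadm hU hx₀U
      refine ⟨{M | hausd d L.1 M.1 < ENNReal.ofReal ε}, ?_, ?_, ?_⟩
      · exact TopologicalSpace.isOpen_generateFrom_of_mem
          ⟨d, hd, L, ENNReal.ofReal ε, ENNReal.ofReal_pos.2 hε, ENNReal.ofReal_ne_top, rfl⟩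
      · show hausd d L.1 L.1 < ENNReal.ofReal ε
        rw [hausd_self (hps d hd).1]
        exact ENNReal.ofReal_pos.2 hε
      · intro M hM
        simp only [Set.mem_setOf_eq] at hM ⊢
        have h2 : (⨆ a ∈ L.1, ⨅ b ∈ M.1, ENNReal.ofReal (d a b)) < ENNReal.ofReal ε :=
          (le_max_left _ _).trans_lt hM
        have h3 : (⨅ b ∈ M.1, ENNReal.ofReal (d x₀ b)) < ENNReal.ofReal ε :=
          lt_of_le_of_lt (le_iSup₂ (f := fun a _ => ⨅ b ∈ M.1, ENNReal.ofReal (d a b)) x₀ hx₀L) h2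
        obtain ⟨b, hb⟩ := iInf_lt_iff.1 h3
        obtain ⟨hbM, hbm⟩ := iInf_lt_iff.1 hb
        exact ⟨b, hbM, hball ((ENNReal.ofReal_lt_ofReal_iff hε).1 hbm)⟩
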